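/- For the exponential-drift model with ρ_R = ρ_C = ρ, one has for all real s and t: −∫_s^t dx/θ(x) = (τ/θ₊)·[ (s−t)/τ + α·ln( (ρ e^{−s/τ}+1)/(ρ e^{−t/τ}+1) ) + β·(e^{−s/τ} − e^{−t/τ})/((ρ e^{−s/τ}+1)(ρ e^{−t/τ}+1)) ], where α = 1 − θ₊/θ₋ and β = (a−ρ)(b−ρ)/ρ. -/

import Mathlib

open Real MeasureTheory intervalIntegral

/-- **Explicit integral of the inverse relaxation time in the exponential-drift model**
(degenerate case `ρ_R = ρ_C = ρ`). -/
theorem exponential_drift_inverse_relaxation_integral_degenerate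
    (a b τ Rm Rp Cm Cp : ℝ)
    (ha : 0 < a) (hb : 0 < b) (hτ : 0 < τ)
    (hRm : 0 < Rm) (hRp : 0 < Rp) (hCm : 0 < Cm) (hCp : 0 < Cp)
    (R C θ : ℝ → ℝ)
    (hR : ∀ t, R t = (a * Rm + Rp * Real.exp (t / τ)) / (a + Real.exp (t / τ)))
    (hC : ∀ t, C t = (b * Cm + Cp * Real.exp (t / τ)) / (b + Real.exp (t / τ)))
    (hθ : ∀ t, θ t = R t * C t)
    (θp θm ρ α β : ℝ)
    (hθp : θp = Rp * Cp) (hθm : θm = Rm * Cm)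
    (hρR : a * Rm / Rp = ρ) (hρC : b * Cm / Cp = ρ)
    (hα : α = 1 - θp / θm) (hβ : β = (a - ρ) * (b - ρ) / ρ) :
    ∀ s t : ℝ,
      -(∫ x in s..t, 1 / θ x) =
        (τ / θp) * ((s - t) / τ +
          α * Real.log ((ρ * Real.exp (-s / τ) + 1) / (ρ * Real.exp (-t / τ) + 1)) +
          β * (Real.exp (-s / τ) - Real.exp (-t / τ)) /
            ((ρ * Real.exp (-s / τ) + 1) * (ρ * Real.exp (-t / τ) + 1))) := by
  have hρ : 0 < ρ := by
    rw [← hρR]; positivity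
  have hRm2 : Rm = ρ * Rp / a := by
    field_simp at hρR ⊢; linarith [hρR]
  have hCm2 : Cm = ρ * Cp / b := by
    field_simp at hρC ⊢; linarith [hρC]
  subst hRm2 hCm2 hθp hθm hα hβ
  have hθeq : θ = fun x => ((a * (ρ * Rp / a) + Rp * Real.exp (x / τ)) / (a + Real.exp (x / τ))) *
      ((b * (ρ * Cp / b) + Cp * Real.exp (x / τ)) / (b + Real.exp (x / τ))) := by
    funext x; rw [hθ, hR, hC]
  have hθpos : ∀ x, 0 < θ x := by
    intro x; rw [hθeq]
    have h1 : 0 < Real.exp (x / τ) := Real.exp_pos _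
    positivity
  have hcont : Continuous fun x => 1 / θ x := by
    simp only [one_div]
    rw [hθeq]
    apply Continuous.inv₀
    · apply Continuous.mul
      · exact (by fun_prop : Continuous fun x : ℝ => a * (ρ * Rp / a) + Rp * Real.exp (x / τ)).div
          (by fun_prop) (fun x => by positivity)
      · exact (by fun_prop : Continuous fun x : ℝ => b * (ρ * Cp / b) + Cp * Real.exp (x / τ)).div
          (by fun_prop) (fun x => by positivity)
    · intro x
      have h := hθpos x
      rw [hθeq] at h
      exact h.ne'
  set G : ℝ → ℝ := fun y => (τ / (Rp * Cp)) * (y / τ +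
      (1 - Rp * Cp / (ρ * Rp / a * (ρ * Cp / b))) * Real.log (ρ * Real.exp (-y / τ) + 1) -
      ((a - ρ) * (b - ρ) / ρ) * (ρ * (ρ * Real.exp (-y / τ) + 1))⁻¹) with hG
  have key : ∀ x : ℝ, HasDerivAt G (1 / θ x) x := by
    intro x
    have he : HasDerivAt (fun y : ℝ => Real.exp (-y / τ)) (Real.exp (-x / τ) * (-1 / τ)) x := by
      have h0 : HasDerivAt (fun y : ℝ => -y / τ) (-1 / τ) x := by
        simpa using ((hasDerivAt_id x).neg.div_const τ)
      exact h0.exp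
    have h1 : HasDerivAt (fun y : ℝ => y / τ) (1 / τ) x := by
      simpa using (hasDerivAt_id x).div_const τ
    have hA : 0 < ρ * Real.exp (-x / τ) + 1 := by positivity
    have h2 : HasDerivAt (fun y => ρ * Real.exp (-y / τ) + 1)
        (ρ * (Real.exp (-x / τ) * (-1 / τ))) x := (he.const_mul ρ).add_const 1
    have h3 : HasDerivAt (fun y => Real.log (ρ * Real.exp (-y / τ) + 1))
        ((ρ * (Real.exp (-x / τ) * (-1 / τ))) / (ρ * Real.exp (-x / τ) + 1)) x :=
      h2.log hA.ne'
    have h4 : HasDerivAt (fun y => (ρ * (ρ * Real.exp (-y / τ) + 1))⁻¹)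
        (-(ρ * (ρ * (Real.exp (-x / τ) * (-1 / τ)))) / (ρ * (ρ * Real.exp (-x / τ) + 1)) ^ 2) x :=
      (h2.const_mul ρ).inv (by positivity)
    have H := ((h1.add (h3.const_mul
        (1 - Rp * Cp / (ρ * Rp / a * (ρ * Cp / b))))).sub
        (h4.const_mul ((a - ρ) * (b - ρ) / ρ))).const_mul (τ / (Rp * Cp))
    refine (congrArg (fun d => HasDerivAt G d x) ?_).mpr H
    rw [hθeq]
    have hv : 0 < Real.exp (x / τ) := Real.exp_pos _
    have hev : Real.exp (-x / τ) = (Real.exp (x / τ))⁻¹ := by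
      rw [← Real.exp_neg, neg_div]
    rw [hev]
    have hA' : 0 < ρ * (Real.exp (x / τ))⁻¹ + 1 := by positivity
    field_simp
    ring
  intro s t
  have hint : (∫ x in s..t, 1 / θ x) = G t - G s :=
    intervalIntegral.integral_eq_sub_of_hasDerivAt (fun x _ => key x)
      (hcont.intervalIntegrable s t)
  rw [hint, hG]
  have hAs : 0 < ρ * Real.exp (-s / τ) + 1 := by positivity
  have hAt : 0 < ρ * Real.exp (-t / τ) + 1 := by positivity
  rw [Real.log_div hAs.ne' hAt.ne']
  field_simp
  ring
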